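/- Let λ > 0 be real and let ρ be the matrix indexed by (Fin 2 × Fin 2) with entries ρ_{(1,2),(1,2)} = ρ_{(2,1),(2,1)} = λ, ρ_{(1,2),(2,1)} = ρ_{(2,1),(1,2)} = −λ, and all other entries 0. Let M := ρ ⊗ 1 + 1 ⊗ ρ − 𝔐(ρ), a matrix indexed by Fin 2 × Fin 2 × Fin 2. Then for every real vector X = (x_{ijk})_{i,j,k∈{1,2}} one has ⟨MX, X⟩ = λ[(x_{121} − x_{112} − x_{211})² + (x_{121}² − x_{112}² − x_{211}²) + (x_{212} − x_{122} − x_{221})² + (x_{212}² − x_{122}² − x_{221}²)], and consequently M is not positive semidefinite (there exists a real vector X with ⟨MX, X⟩ < 0). -/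

import Mathlib

open Matrix
open scoped ComplexOrder

variable {ι : Type*} [Fintype ι] [DecidableEq ι]

/-- `ρ ⊗ 1`, defined entrywise on triple indices:
`(ρ ⊗ 1)_{(i,j,k),(i',j',k')} = ρ_{(i,j),(i',j')} δ_{kk'}`. -/
def tensorOne (ρ : Matrix (ι × ι) (ι × ι) ℂ) : Matrix (ι × ι × ι) (ι × ι × ι) ℂ :=
  fun p q => ρ (p.1, p.2.1) (q.1, q.2.1) * (if p.2.2 = q.2.2 then 1 else 0)

/-- `1 ⊗ ρ`, defined entrywise on triple indices:
`(1 ⊗ ρ)_{(i,j,k),(i',j',k')} = δ_{ii'} ρ_{(j,k),(j',k')}`. -/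
def oneTensor (ρ : Matrix (ι × ι) (ι × ι) ℂ) : Matrix (ι × ι × ι) (ι × ι × ι) ℂ :=
  fun p q => (if p.1 = q.1 then 1 else 0) * ρ (p.2.1, p.2.2) (q.2.1, q.2.2)

/-- The middle-unit map `𝔐`, with `𝔐(a ⊗ b) = a ⊗ 1 ⊗ b`, defined entrywise:
`𝔐(ρ)_{(i,k,j),(i',k',j')} = δ_{kk'} ρ_{(i,j),(i',j')}`. -/
def midUnit (ρ : Matrix (ι × ι) (ι × ι) ℂ) : Matrix (ι × ι × ι) (ι × ι × ι) ℂ :=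
  fun p q => (if p.2.1 = q.2.1 then 1 else 0) * ρ (p.1, p.2.2) (q.1, q.2.2)

/-- The candidate quantum metric on `qM₂(ℂ)`: `ρ_{(1,2),(1,2)} = ρ_{(2,1),(2,1)} = λ`,
`ρ_{(1,2),(2,1)} = ρ_{(2,1),(1,2)} = −λ`, all other entries `0` (indices `1,2` are
rendered as `0,1 : Fin 2`). -/
def rhoLam (lam : ℝ) : Matrix (Fin 2 × Fin 2) (Fin 2 × Fin 2) ℂ := fun p q =>
  if p = ((0 : Fin 2), (1 : Fin 2)) ∧ q = ((0 : Fin 2), (1 : Fin 2)) then (lam : ℂ)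
  else if p = ((1 : Fin 2), (0 : Fin 2)) ∧ q = ((1 : Fin 2), (0 : Fin 2)) then (lam : ℂ)
  else if p = ((0 : Fin 2), (1 : Fin 2)) ∧ q = ((1 : Fin 2), (0 : Fin 2)) then -(lam : ℂ)
  else if p = ((1 : Fin 2), (0 : Fin 2)) ∧ q = ((0 : Fin 2), (1 : Fin 2)) then -(lam : ℂ)
  else 0

/-- for `λ > 0` and `M = ρ ⊗ 1 + 1 ⊗ ρ − 𝔐(ρ)`, the quadratic form of `M`
on every real vector `X = (x_{ijk})` equals
`λ[(x₁₂₁−x₁₁₂−x₂₁₁)² + (x₁₂₁²−x₁₁₂²−x₂₁₁²) + (x₂₁₂−x₁₂₂−x₂₂₁)² + (x₂₁₂²−x₁₂₂²−x₂₂₁²)]`,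
and consequently `M` is not positive semidefinite. -/
theorem stmt4 (lam : ℝ) (hlam : 0 < lam)
    (M : Matrix (Fin 2 × Fin 2 × Fin 2) (Fin 2 × Fin 2 × Fin 2) ℂ)
    (hM : M = tensorOne (rhoLam lam) + oneTensor (rhoLam lam) - midUnit (rhoLam lam)) :
    (∀ X : Fin 2 × Fin 2 × Fin 2 → ℝ,
      ∑ p : Fin 2 × Fin 2 × Fin 2, ∑ q : Fin 2 × Fin 2 × Fin 2,
          (X p : ℂ) * M p q * (X q : ℂ) =
        ((lam * ((X (0, 1, 0) - X (0, 0, 1) - X (1, 0, 0)) ^ 2 +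
            (X (0, 1, 0) ^ 2 - X (0, 0, 1) ^ 2 - X (1, 0, 0) ^ 2) +
            (X (1, 0, 1) - X (0, 1, 1) - X (1, 1, 0)) ^ 2 +
            (X (1, 0, 1) ^ 2 - X (0, 1, 1) ^ 2 - X (1, 1, 0) ^ 2)) : ℝ) : ℂ)) ∧
    (∃ X : Fin 2 × Fin 2 × Fin 2 → ℝ,
      ∑ p : Fin 2 × Fin 2 × Fin 2, ∑ q : Fin 2 × Fin 2 × Fin 2,
          (X p : ℂ) * M p q * (X q : ℂ) < 0) ∧
    ¬ M.PosSemidef := by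
  subst hM
  have key : ∀ X : Fin 2 × Fin 2 × Fin 2 → ℝ,
      ∑ p : Fin 2 × Fin 2 × Fin 2, ∑ q : Fin 2 × Fin 2 × Fin 2,
          (X p : ℂ) * (tensorOne (rhoLam lam) + oneTensor (rhoLam lam) - midUnit (rhoLam lam)) p q * (X q : ℂ) =
        ((lam * ((X (0, 1, 0) - X (0, 0, 1) - X (1, 0, 0)) ^ 2 +
            (X (0, 1, 0) ^ 2 - X (0, 0, 1) ^ 2 - X (1, 0, 0) ^ 2) +
            (X (1, 0, 1) - X (0, 1, 1) - X (1, 1, 0)) ^ 2 +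
            (X (1, 0, 1) ^ 2 - X (0, 1, 1) ^ 2 - X (1, 1, 0) ^ 2)) : ℝ) : ℂ) := by
    intro X
    simp only [Fintype.sum_prod_type, Fin.sum_univ_two, tensorOne, oneTensor, midUnit, rhoLam,
      Matrix.add_apply, Matrix.sub_apply, Prod.mk.injEq]
    norm_num
    ring
  refine ⟨key, ?_⟩
  set X : Fin 2 × Fin 2 × Fin 2 → ℝ := fun p =>
    if p = (0, 1, 0) then 1 else if p = (0, 0, 1) then 2 else 0 with hX
  have hval : ∑ p : Fin 2 × Fin 2 × Fin 2, ∑ q : Fin 2 × Fin 2 × Fin 2,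
      (X p : ℂ) * (tensorOne (rhoLam lam) + oneTensor (rhoLam lam) - midUnit (rhoLam lam)) p q * (X q : ℂ)
      = ((-2 * lam : ℝ) : ℂ) := by
    rw [key X]
    norm_num [hX]
    ring
  have hneg : ∑ p : Fin 2 × Fin 2 × Fin 2, ∑ q : Fin 2 × Fin 2 × Fin 2,
      (X p : ℂ) * (tensorOne (rhoLam lam) + oneTensor (rhoLam lam) - midUnit (rhoLam lam)) p q * (X q : ℂ) < 0 := by
    rw [hval]
    have : (-2 * lam : ℝ) < 0 := by linarith
    exact_mod_cast this
  refine ⟨⟨X, hneg⟩, ?_⟩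
  intro h
  have h2 := h.dotProduct_mulVec_nonneg (fun p => (X p : ℂ))
  simp only [dotProduct, Matrix.mulVec, Pi.star_apply, Complex.star_def,
    Complex.conj_ofReal, Finset.mul_sum] at h2
  have h3 : (0:ℂ) ≤ ∑ p : Fin 2 × Fin 2 × Fin 2, ∑ q : Fin 2 × Fin 2 × Fin 2,
      (X p : ℂ) * (tensorOne (rhoLam lam) + oneTensor (rhoLam lam) - midUnit (rhoLam lam)) p q * (X q : ℂ) := by
    convert h2 using 2 with p
    exact Finset.sum_congr rfl fun q _ => by ring
  exact absurd (lt_of_le_of_lt h3 hneg) (lt_irrefl 0)
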